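/- Let n ≥ 1, let u ∈ ℝⁿ be a unit vector, let r > 0, and let 0 < h ≤ r. Then the Lebesgue measure of the spherical cap {x ∈ ℝⁿ : |x| ≤ r, ⟨u, x⟩ ≥ r − h} is at least (ω_{n−1}/(n+1)) · (2r/π)ⁿ · (2h/r)^{(n+1)/2}, where ω_{n−1} is the Lebesgue measure of the closed unit ball in ℝⁿ⁻¹. -/

import Mathlib

open MeasureTheory Metric
open scoped RealInnerProductSpace

lemma keyIneq (m : ℕ) : (2:ℝ)^(3*m+2) * ((m:ℝ)+2)^(2*m)
    ≤ Real.pi^(2*m+2) * (((m:ℝ))*((m:ℝ)+4))^m := by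
  have hpi : (3.14:ℝ) < Real.pi := Real.pi_gt_d6.trans_le' (by norm_num)
  have hpi2 : (9.8:ℝ) ≤ Real.pi^2 := by nlinarith
  match m with
  | 0 => norm_num; nlinarith
  | 1 => norm_num; nlinarith [sq_nonneg (Real.pi^2)]
  | 2 => norm_num; nlinarith [sq_nonneg (Real.pi^2), pow_le_pow_left₀ (by norm_num) hpi2 3]
  | (k+3) =>
    set m := k + 3 with hm
    have hm3 : (3:ℝ) ≤ (m:ℕ) := by exact_mod_cast Nat.le_add_left 3 k
    have hmn : (0:ℝ) ≤ (m:ℕ) := by positivity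
    have h1 : (8:ℝ)*((m:ℝ)+2)^2 ≤ Real.pi^2 * ((m:ℝ)*((m:ℝ)+4)) := by
      nlinarith [mul_le_mul_of_nonneg_right hpi2
          (show (0:ℝ) ≤ (m:ℝ)*((m:ℝ)+4) by positivity),
        mul_nonneg (sub_nonneg.2 hm3) hmn]
    have h2 : ((8:ℝ)*((m:ℝ)+2)^2)^m ≤ (Real.pi^2 * ((m:ℝ)*((m:ℝ)+4)))^m :=
      pow_le_pow_left₀ (by positivity) h1 m
    have e1 : (2:ℝ)^(3*m+2) * ((m:ℝ)+2)^(2*m) = 4 * ((8:ℝ)*((m:ℝ)+2)^2)^m := by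
      rw [mul_pow, ← pow_mul, pow_add, show ((8:ℝ))^m = 2^(3*m) by rw [pow_mul]; norm_num]
      ring
    have e2 : Real.pi^(2*m+2) * (((m:ℝ))*((m:ℝ)+4))^m
        = Real.pi^2 * (Real.pi^2 * ((m:ℝ)*((m:ℝ)+4)))^m := by
      rw [pow_add, mul_pow, mul_pow, mul_pow, ← pow_mul]
      ring
    rw [e1, e2]
    have h4 : (4:ℝ) ≤ Real.pi^2 := by nlinarith
    exact mul_le_mul h4 h2 (by positivity) (by positivity)

lemma capVol (m : ℕ) (u : EuclideanSpace ℝ (Fin (m+1))) (hu : ‖u‖ = 1)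
    (r h a b ρ : ℝ) (hr0 : 0 ≤ r) (ha0 : 0 ≤ a) (hab : a ≤ b) (hρ : 0 ≤ ρ)
    (hsum : b^2 + ρ^2 ≤ r^2) (hra : r - h ≤ a) :
    ENNReal.ofReal (b - a) * (ENNReal.ofReal (ρ^m) *
        volume (closedBall (0 : EuclideanSpace ℝ (Fin m)) 1))
      ≤ volume {x : EuclideanSpace ℝ (Fin (m+1)) | ‖x‖ ≤ r ∧ r - h ≤ ⟪u, x⟫} := by
  obtain ⟨B, hB⟩ : ∃ B : OrthonormalBasis (Fin (m+1)) ℝ (EuclideanSpace ℝ (Fin (m+1))),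
      ∀ i ∈ ({0} : Set (Fin (m+1))), B i = (fun _ => u) i := by
    apply Orthonormal.exists_orthonormalBasis_extension_of_card_eq
    · simp
    · constructor
      · intro i
        simpa using hu
      · intro i j hij
        exact absurd (Subsingleton.elim i j) hij
  have hB0 : B 0 = u := hB 0 rfl
  set T : Set (EuclideanSpace ℝ (Fin (m+1))) := {y | ‖y‖ ≤ r ∧ r - h ≤ y 0} with hT
  have hTmeas : MeasurableSet T := by
    have : IsClosed T :=
      (isClosed_le continuous_norm continuous_const).inter
        (isClosed_le continuous_const (EuclideanSpace.proj (0 : Fin (m+1))).continuous)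
    exact this.measurableSet
  have hcap : {x : EuclideanSpace ℝ (Fin (m+1)) | ‖x‖ ≤ r ∧ r - h ≤ ⟪u, x⟫} = B.repr ⁻¹' T := by
    ext x
    simp only [Set.mem_setOf_eq, Set.mem_preimage, hT, B.repr.norm_map]
    rw [show ⟪u, x⟫ = B.repr x 0 by rw [B.repr_apply_apply, hB0]]
  rw [hcap, B.measurePreserving_repr.measure_preimage hTmeas.nullMeasurableSet]
  set C : Set (Fin m → ℝ) := {z | ∑ i, z i ^ 2 ≤ ρ ^ 2} with hC
  have hCmeas : MeasurableSet C := by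
    apply measurableSet_le _ measurable_const
    exact Finset.measurable_sum _ fun i _ => (measurable_pi_apply i).pow_const 2
  set e := MeasurableEquiv.piFinSuccAbove (fun _ : Fin (m+1) => ℝ) 0 with he
  set f := (MeasurableEquiv.toLp 2 (Fin (m+1) → ℝ)).symm with hf
  set S : Set (EuclideanSpace ℝ (Fin (m+1))) := f ⁻¹' (e ⁻¹' (Set.Icc a b ×ˢ C)) with hS
  have hSsub : S ⊆ T := by
    intro x hx
    have hx' : e (f x) ∈ Set.Icc a b ×ˢ C := hx
    obtain ⟨hx12, hx3⟩ := hx'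
    have he1 : (e (f x)).1 = x 0 := rfl
    have he2 : ∀ i : Fin m, (e (f x)).2 i = x i.succ := by
      intro i
      show (f x) ((0 : Fin (m+1)).succAbove i) = x i.succ
      rw [Fin.zero_succAbove]
      rfl
    rw [Set.mem_Icc, he1] at hx12
    obtain ⟨hx1, hx2⟩ := hx12
    have hx3' : ∑ i : Fin m, x i.succ ^ 2 ≤ ρ ^ 2 := by
      refine le_trans (le_of_eq ?_) hx3
      exact Finset.sum_congr rfl fun i _ => by rw [he2]
    constructor
    · have hsum' : ∑ i, x i ^ 2 ≤ r ^ 2 := by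
        rw [Fin.sum_univ_succ]
        nlinarith [sq_nonneg (x 0), hx1, hx2, ha0, hx3']
      have h1 : ‖x‖ = Real.sqrt (∑ i, x i ^ 2) := by
        rw [EuclideanSpace.norm_eq]
        congr 1
        exact Finset.sum_congr rfl fun i _ => by rw [Real.norm_eq_abs, sq_abs]
      rw [h1]
      calc Real.sqrt (∑ i, x i ^ 2) ≤ Real.sqrt (r ^ 2) := Real.sqrt_le_sqrt hsum'
        _ = r := Real.sqrt_sq hr0
    · exact le_trans hra hx1
  refine le_trans (le_of_eq ?_) (measure_mono hSsub)
  have hprodmeas : MeasurableSet (Set.Icc a b ×ˢ C) := measurableSet_Icc.prod hCmeas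
  rw [hS, (EuclideanSpace.volume_preserving_symm_measurableEquiv_toLp (Fin (m+1))).measure_preimage
      ((e.measurable hprodmeas).nullMeasurableSet),
    (volume_preserving_piFinSuccAbove (fun _ : Fin (m+1) => ℝ) 0).measure_preimage
      hprodmeas.nullMeasurableSet,
    Measure.volume_eq_prod, Measure.prod_prod, Real.volume_Icc]
  congr 1
  have hCball : (MeasurableEquiv.toLp 2 (Fin m → ℝ)).symm ⁻¹' C
      = closedBall (0 : EuclideanSpace ℝ (Fin m)) ρ := by
    rw [EuclideanSpace.closedBall_zero_eq _ hρ]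
    rfl
  rw [← (EuclideanSpace.volume_preserving_symm_measurableEquiv_toLp (Fin m)).measure_preimage
      hCmeas.nullMeasurableSet, hCball,
    Measure.addHaar_closedBall' _ _ hρ, finrank_euclideanSpace_fin]

theorem stmt16 {n : ℕ} (hn : 1 ≤ n) (u : EuclideanSpace ℝ (Fin n)) (hu : ‖u‖ = 1)
    (r h : ℝ) (hr : 0 < r) (h0 : 0 < h) (hhr : h ≤ r) :
    (volume (closedBall (0 : EuclideanSpace ℝ (Fin (n - 1))) 1)).toReal / (n + 1) *
        (2 * r / Real.pi) ^ n * (2 * h / r) ^ (((n : ℝ) + 1) / 2) ≤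
      (volume {x : EuclideanSpace ℝ (Fin n) | ‖x‖ ≤ r ∧ r - h ≤ ⟪u, x⟫}).toReal := by
  obtain ⟨m, rfl⟩ : ∃ m, n = m + 1 := ⟨n - 1, by omega⟩
  rw [Nat.add_sub_cancel]
  have hπ := Real.pi_pos
  set M := (m:ℝ) with hM
  have hM0 : (0:ℝ) ≤ M := Nat.cast_nonneg m
  have hM2 : (0:ℝ) < M + 2 := by linarith
  set a := r - h with hadef
  set b := r - h*M/(M+2) with hbdef
  have hc0 : (0:ℝ) ≤ h*r*M*(M+4) := by positivity
  set ρ := Real.sqrt (h*r*M*(M+4)) / (M+2) with hρdef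
  have hρ0 : 0 ≤ ρ := by positivity
  have ha0 : 0 ≤ a := by rw [hadef]; linarith
  have hab : a ≤ b := by
    rw [hadef, hbdef, sub_le_sub_iff_left, div_le_iff₀ hM2]
    nlinarith
  have hsum : b^2 + ρ^2 ≤ r^2 := by
    have hsq : ρ^2 = h*r*M*(M+4)/(M+2)^2 := by rw [hρdef, div_pow, Real.sq_sqrt hc0]
    have hbb : b = (r*(M+2) - h*M)/(M+2) := by rw [hbdef]; field_simp
    rw [hsq, hbb, div_pow, ← add_div, div_le_iff₀ (by positivity)]
    nlinarith [mul_nonneg (mul_nonneg h0.le (sq_nonneg M)) (sub_nonneg.2 hhr)]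
  have hcap := capVol m u hu r h a b ρ hr.le ha0 hab hρ0 hsum (le_of_eq hadef.symm)
  have hfin : volume {x : EuclideanSpace ℝ (Fin (m+1)) | ‖x‖ ≤ r ∧ r - h ≤ ⟪u, x⟫} ≠ ⊤ := by
    refine ne_top_of_le_ne_top
      (measure_closedBall_lt_top (x := (0:EuclideanSpace ℝ (Fin (m+1)))) (r := r)).ne
      (measure_mono ?_)
    intro x hx
    exact mem_closedBall_zero_iff.2 hx.1
  have htr := ENNReal.toReal_mono hfin hcap
  rw [ENNReal.toReal_mul, ENNReal.toReal_mul,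
    ENNReal.toReal_ofReal (by linarith : (0:ℝ) ≤ b - a),
    ENNReal.toReal_ofReal (by positivity : (0:ℝ) ≤ ρ^m)] at htr
  refine le_trans ?_ htr
  set ω := (volume (closedBall (0 : EuclideanSpace ℝ (Fin m)) 1)).toReal with hω
  have hω0 : 0 ≤ ω := ENNReal.toReal_nonneg
  have hba : b - a = 2*h/(M+2) := by
    rw [hadef, hbdef]
    field_simp
    ring
  -- core inequality
  have ht0 : (0:ℝ) < 2*h/r := by positivity
  have hexp : (((m+1 : ℕ) : ℝ) + 1)/2 = (M+2)/2 := by push_cast; ring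
  have hst : Real.sqrt (2*h/r) ^ (m+2) = (2*h/r) ^ ((M+2)/2 : ℝ) := by
    rw [Real.sqrt_eq_rpow, ← Real.rpow_natCast ((2*h/r) ^ ((1:ℝ)/2)) (m+2),
      ← Real.rpow_mul ht0.le]
    congr 1
    push_cast
    ring
  have hcore : (2*r/Real.pi)^(m+1) * (2*h/r) ^ ((M+2)/2 : ℝ) ≤ 2*h * ρ^m := by
    rw [← hst]
    have hL0 : 0 ≤ (2*r/Real.pi)^(m+1) * Real.sqrt (2*h/r) ^ (m+2) := by positivity
    have hR0 : (0:ℝ) ≤ 2*h * ρ^m := by positivity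
    have hsq : ((2*r/Real.pi)^(m+1) * Real.sqrt (2*h/r) ^ (m+2))^2 ≤ (2*h * ρ^m)^2 := by
      have est : Real.sqrt (2*h/r)^2 = 2*h/r := Real.sq_sqrt ht0.le
      have esc : Real.sqrt (h*r*M*(M+4))^2 = h*r*M*(M+4) := Real.sq_sqrt hc0
      have e1 : ((2*r/Real.pi)^(m+1) * Real.sqrt (2*h/r) ^ (m+2))^2
          = ((2*r/Real.pi)^2)^(m+1) * (Real.sqrt (2*h/r)^2)^(m+2) := by
        rw [mul_pow, pow_right_comm ((2:ℝ)*r/Real.pi) (m+1) 2,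
          pow_right_comm (Real.sqrt (2*h/r)) (m+2) 2]
      have e2 : (2*h * ρ^m)^2
          = 4*h^2 * ((Real.sqrt (h*r*M*(M+4))^2)^m / ((M+2)^2)^m) := by
        rw [hρdef, mul_pow, pow_right_comm, div_pow (Real.sqrt (h*r*M*(M+4))) (M+2) 2,
          div_pow (Real.sqrt (h*r*M*(M+4))^2)]
        ring
      rw [est] at e1
      rw [esc] at e2
      rw [e1, e2]
      rw [div_pow (2*r) Real.pi 2, div_pow, div_pow, div_mul_div_comm, mul_div_assoc',
        div_le_div_iff₀ (by positivity) (by positivity)]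
      have hkey := keyIneq m
      have hsplit : ((2:ℝ)*r)^2 = 2^2 * r^2 := by ring
      calc ((2*r)^2)^(m+1) * (2*h)^(m+2) * ((M+2)^2)^m
          = (4*h^(m+2)*r^(2*m+2)) * ((2:ℝ)^(3*m+2) * (M+2)^(2*m)) := by
            rw [hsplit, mul_pow, ← pow_mul, ← pow_mul, mul_pow, ← pow_mul,
              show 2*(m+1) = 2*m+2 from by ring]
            rw [show (2:ℝ)^(2*m+2) * r^(2*m+2) * ((2:ℝ)^(m+2) * h^(m+2))
                = ((2:ℝ)^(2*m+2) * 2^(m+2)) * r^(2*m+2) * h^(m+2) from by ring,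
              ← pow_add, show 2*m+2+(m+2) = (3*m+2)+2 from by ring, pow_add]
            ring
        _ ≤ (4*h^(m+2)*r^(2*m+2)) * (Real.pi^(2*m+2) * (M*(M+4))^m) :=
            mul_le_mul_of_nonneg_left hkey (by positivity)
        _ = 4*h^2*(h*r*M*(M+4))^m * ((Real.pi^2)^(m+1) * r^(m+2)) := by
            rw [mul_pow M (M+4) m, mul_pow, mul_pow, mul_pow, ← pow_mul Real.pi,
              show 2*(m+1) = 2*m+2 from by ring]
            ring
    nlinarith [hsq, hL0, hR0]
  rw [hexp]
  calc ω / (↑(m+1) + 1) * (2 * r / Real.pi) ^ (m+1) * (2 * h / r) ^ ((M+2)/2 : ℝ)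
      = ω * ((2 * r / Real.pi) ^ (m+1) * (2 * h / r) ^ ((M+2)/2 : ℝ)) / (M+2) := by
        push_cast
        ring
    _ ≤ ω * (2*h * ρ^m) / (M+2) := by
        gcongr
    _ = (b - a) * (ρ^m * ω) := by rw [hba]; ring
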